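/- Fix x > 0 and γ > 0. The function φ₂(α) = ₁F₂(α; α+1, γ; -x) has k-th derivative, for k ≥ 1, given by dᵏφ₂/dαᵏ = ((-1)^k k! x/((α+1)^{k+1} γ)) · ₍k+1₎F₍k+2₎(α+1,…,α+1; α+2,…,α+2, γ+1; -x), where α+1 appears k+1 times as a numerator parameter and α+2 appears k+1 times as a denominator parameter. -/

import Mathlib

open Real

/-- Generalized hypergeometric function ₁F₂. -/
noncomputable def hyp1F2 (a b c x : ℝ) : ℝ :=
  ∑' n : ℕ, (Real.Gamma (a + n) / Real.Gamma a) * (Real.Gamma b / Real.Gamma (b + n)) *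
    (Real.Gamma c / Real.Gamma (c + n)) * x ^ n / (n.factorial : ℝ)

/-- The generalized hypergeometric function
₍k+1₎F₍k+2₎(α+1,…,α+1; α+2,…,α+2, γ+1; x), where α+1 appears k+1 times in the numerator
and α+2 appears k+1 times in the denominator. -/
noncomputable def hypKp1Fkp2 (k : ℕ) (α γ x : ℝ) : ℝ :=
  ∑' n : ℕ,
    ((Real.Gamma (α + 1 + n) / Real.Gamma (α + 1)) *
        (Real.Gamma (α + 2) / Real.Gamma (α + 2 + n))) ^ (k + 1) *
      (Real.Gamma (γ + 1) / Real.Gamma (γ + 1 + n)) * x ^ n / (n.factorial : ℝ)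

noncomputable def HypAux.c (γ x : ℝ) (n : ℕ) : ℝ :=
  Real.Gamma γ / Real.Gamma (γ + n) * (-x) ^ n / n.factorial

noncomputable def HypAux.g (k : ℕ) (a : ℝ) (n : ℕ) : ℝ :=
  (-1 : ℝ) ^ (k + 1) * k.factorial * n / (a + n) ^ (k + 1)

namespace HypAux

lemma gamma_min_le {γ : ℝ} (hγ : 0 < γ) (n : ℕ) :
    min γ 1 * Real.Gamma γ ≤ Real.Gamma (γ + n) := by
  induction n with
  | zero => simpa using mul_le_of_le_one_left (Real.Gamma_pos_of_pos hγ).le (min_le_right γ 1)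
  | succ m ih =>
    have h1 : Real.Gamma (γ + (m + 1 : ℕ)) = (γ + m) * Real.Gamma (γ + m) := by
      have h : (γ + ((m : ℕ) + 1 : ℕ) : ℝ) = (γ + m) + 1 := by push_cast; ring
      rw [h, Real.Gamma_add_one (add_pos_of_pos_of_nonneg hγ (Nat.cast_nonneg m)).ne']
    rw [h1]
    rcases Nat.eq_zero_or_pos m with hm | hm
    · subst hm
      simp only [Nat.cast_zero, add_zero]
      have := Real.Gamma_pos_of_pos hγ
      nlinarith [min_le_left γ 1]
    · have h2 : (1 : ℝ) ≤ γ + m := by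
        have : (1:ℝ) ≤ (m:ℝ) := by exact_mod_cast hm
        linarith
      calc min γ 1 * Real.Gamma γ ≤ Real.Gamma (γ + m) := ih
        _ ≤ (γ + m) * Real.Gamma (γ + m) :=
          le_mul_of_one_le_left (Real.Gamma_pos_of_pos (add_pos_of_pos_of_nonneg hγ (Nat.cast_nonneg _))).le h2

lemma summable_norm_c {γ : ℝ} (hγ : 0 < γ) (x : ℝ) :
    Summable (fun n => ‖c γ x n‖) := by
  have hmin : 0 < min γ 1 := lt_min hγ one_pos
  apply Summable.of_nonneg_of_le (fun n => norm_nonneg _)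
    (f := fun n => (min γ 1)⁻¹ * (|x| ^ n / n.factorial))
  · intro n
    have hΓn : 0 < Real.Gamma (γ + n) := Real.Gamma_pos_of_pos (add_pos_of_pos_of_nonneg hγ (Nat.cast_nonneg _))
    have hΓ : 0 < Real.Gamma γ := Real.Gamma_pos_of_pos hγ
    have hratio : Real.Gamma γ / Real.Gamma (γ + n) ≤ (min γ 1)⁻¹ := by
      rw [div_le_iff₀ hΓn]
      have hinv : 0 < (min γ 1)⁻¹ := by positivity
      have hmul : min γ 1 * (min γ 1)⁻¹ = 1 := mul_inv_cancel₀ hmin.ne'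
      nlinarith [gamma_min_le hγ n]
    have : ‖c γ x n‖ = (Real.Gamma γ / Real.Gamma (γ + n)) * (|x| ^ n / n.factorial) := by
      unfold c
      rw [Real.norm_eq_abs, abs_div, abs_mul, abs_div, abs_pow, abs_neg,
        abs_of_pos hΓ, abs_of_pos hΓn, Nat.abs_cast]
      ring
    rw [this]
    have hp : 0 ≤ |x| ^ n / (n.factorial : ℝ) := by positivity
    exact mul_le_mul_of_nonneg_right hratio hp
  · exact (Real.summable_pow_div_factorial |x|).mul_left _

lemma abs_g_le {a : ℝ} (ha : 0 < a) (k n : ℕ) : ‖g k a n‖ ≤ k.factorial := by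
  have hpos : 0 < (a + n : ℝ) := add_pos_of_pos_of_nonneg ha (Nat.cast_nonneg n)
  have hle : (n : ℝ) ≤ (a + n) ^ (k + 1) := by
    rcases Nat.eq_zero_or_pos n with h | h
    · simp only [h, Nat.cast_zero]
      positivity
    · have h1 : (1 : ℝ) ≤ (n : ℝ) := by exact_mod_cast h
      calc (n : ℝ) = (n : ℝ) ^ 1 := (pow_one _).symm
        _ ≤ (n : ℝ) ^ (k + 1) := pow_le_pow_right₀ h1 (by omega)
        _ ≤ (a + n) ^ (k + 1) := by gcongr; linarith
  have hval : ‖g k a n‖ = k.factorial * n / (a + n) ^ (k + 1) := by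
    unfold g
    rw [Real.norm_eq_abs, abs_div, abs_mul, abs_mul, abs_pow, abs_neg, abs_one, one_pow,
      one_mul, Nat.abs_cast, Nat.abs_cast, abs_of_pos (pow_pos hpos _)]
  rw [hval, div_le_iff₀ (pow_pos hpos _)]
  exact mul_le_mul_of_nonneg_left hle (Nat.cast_nonneg _)

lemma hasDerivAt_g {a : ℝ} (ha : 0 < a) (k n : ℕ) :
    HasDerivAt (fun b => g k b n) (g (k + 1) a n) a := by
  have hpos : 0 < (a + n : ℝ) := add_pos_of_pos_of_nonneg ha (Nat.cast_nonneg n)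
  have hne : ((a : ℝ) + n) ^ (k + 1) ≠ 0 := by positivity
  have h1 : HasDerivAt (fun b : ℝ => b + n) 1 a := (hasDerivAt_id a).add_const _
  have h3 := (hasDerivAt_const a ((-1 : ℝ) ^ (k + 1) * k.factorial * n)).div (h1.pow (k + 1)) hne
  refine h3.congr_deriv ?_
  simp only [Pi.pow_apply]
  unfold g
  simp only [Nat.add_sub_cancel]
  rw [Nat.factorial_succ]
  push_cast
  field_simp
  ring

lemma summable_cg {γ : ℝ} (hγ : 0 < γ) (x : ℝ) {a : ℝ} (ha : 0 < a) (k : ℕ) :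
    Summable (fun n => c γ x n * g k a n) := by
  apply Summable.of_norm_bounded (g := fun n => (k.factorial : ℝ) * ‖c γ x n‖)
    ((summable_norm_c hγ x).mul_left _)
  intro n
  rw [norm_mul, mul_comm]
  exact mul_le_mul_of_nonneg_right (abs_g_le ha k n) (norm_nonneg _)

noncomputable def F (γ x : ℝ) (k : ℕ) (a : ℝ) : ℝ := ∑' n, c γ x n * g k a n

lemma hasDerivAt_F {γ : ℝ} (hγ : 0 < γ) (x : ℝ) (k : ℕ) {a : ℝ} (ha : 0 < a) :
    HasDerivAt (F γ x k) (F γ x (k + 1) a) a := by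
  apply hasDerivAt_tsum_of_isPreconnected
    (u := fun n => ((k + 1).factorial : ℝ) * ‖c γ x n‖)
    (((summable_norm_c hγ x).mul_left _)) isOpen_Ioi isPreconnected_Ioi
    (g' := fun n b => c γ x n * g (k + 1) b n)
    (fun n b hb => (hasDerivAt_g hb k n).const_mul _)
    (fun n b hb => by
      rw [norm_mul, mul_comm]
      exact mul_le_mul_of_nonneg_right (abs_g_le hb (k + 1) n) (norm_nonneg _))
    ha (summable_cg hγ x ha k) ha
lemma phi_eq {γ : ℝ} (hγ : 0 < γ) (x : ℝ) {a : ℝ} (ha : 0 < a) :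
    hyp1F2 a (a + 1) γ (-x) = (∑' n, c γ x n) + F γ x 0 a := by
  unfold hyp1F2 F
  rw [← Summable.tsum_add ((summable_norm_c hγ x).of_norm) (summable_cg hγ x ha 0)]
  apply tsum_congr
  intro n
  have hΓa : 0 < Real.Gamma a := Real.Gamma_pos_of_pos ha
  have hpos : 0 < a + (n : ℝ) := add_pos_of_pos_of_nonneg ha (Nat.cast_nonneg n)
  have hΓan : 0 < Real.Gamma (a + n) := Real.Gamma_pos_of_pos hpos
  have hΓγn : 0 < Real.Gamma (γ + n) :=
    Real.Gamma_pos_of_pos (add_pos_of_pos_of_nonneg hγ (Nat.cast_nonneg n))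
  have h1 : Real.Gamma (a + 1) = a * Real.Gamma a := Real.Gamma_add_one ha.ne'
  have h2 : Real.Gamma (a + 1 + n) = (a + n) * Real.Gamma (a + n) := by
    rw [show a + 1 + (n : ℝ) = (a + n) + 1 by ring, Real.Gamma_add_one hpos.ne']
  rw [h1, h2]
  unfold c g
  have hfn : ((n.factorial : ℝ)) ≠ 0 := Nat.cast_ne_zero.mpr n.factorial_ne_zero
  field_simp
  ring

lemma iteratedDeriv_eq_F {γ x : ℝ} (hγ : 0 < γ) (k : ℕ) (hk : 1 ≤ k) :
    ∀ a : ℝ, 0 < a →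
      iteratedDeriv k (fun a : ℝ => hyp1F2 a (a + 1) γ (-x)) a = F γ x k a := by
  induction k, hk using Nat.le_induction with
  | base =>
    intro a ha
    rw [iteratedDeriv_one]
    have heq : (fun a : ℝ => hyp1F2 a (a + 1) γ (-x)) =ᶠ[nhds a]
        (fun b => (∑' n, c γ x n) + F γ x 0 b) := by
      filter_upwards [isOpen_Ioi.mem_nhds ha] with b hb using phi_eq hγ x hb
    rw [heq.deriv_eq]
    exact ((hasDerivAt_F hγ x 0 ha).const_add _).deriv
  | succ k hk ih =>
    intro a ha
    rw [iteratedDeriv_succ]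
    have heq : iteratedDeriv k (fun a : ℝ => hyp1F2 a (a + 1) γ (-x)) =ᶠ[nhds a]
        F γ x k := by
      filter_upwards [isOpen_Ioi.mem_nhds ha] with b hb using ih b hb
    rw [heq.deriv_eq]
    exact (hasDerivAt_F hγ x k ha).deriv

lemma F_eq {γ x α : ℝ} (hγ : 0 < γ) (hα : 0 < α) (k : ℕ) :
    F γ x k α = ((-1 : ℝ) ^ k * (k.factorial : ℝ) * x / ((α + 1) ^ (k + 1) * γ)) *
      hypKp1Fkp2 k α γ (-x) := by
  unfold F hypKp1Fkp2
  rw [← tsum_mul_left, Summable.tsum_eq_zero_add (summable_cg hγ x hα k)]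
  have h0 : c γ x 0 * g k α 0 = 0 := by unfold g; simp
  rw [h0, zero_add]
  apply tsum_congr
  intro n
  have hαn : 0 < α + 1 + (n : ℝ) := by positivity
  have hα1 : (0:ℝ) < α + 1 := by linarith
  have hγn : 0 < γ + (n : ℝ) := add_pos_of_pos_of_nonneg hγ (Nat.cast_nonneg n)
  have hΓγ : 0 < Real.Gamma γ := Real.Gamma_pos_of_pos hγ
  have hΓγn : 0 < Real.Gamma (γ + n) := Real.Gamma_pos_of_pos hγn
  have hΓα1 : 0 < Real.Gamma (α + 1) := Real.Gamma_pos_of_pos hα1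
  have hΓα1n : 0 < Real.Gamma (α + 1 + n) := Real.Gamma_pos_of_pos hαn
  have hfn : ((n.factorial : ℝ)) ≠ 0 := Nat.cast_ne_zero.mpr n.factorial_ne_zero
  have e1 : Real.Gamma (γ + ((n + 1 : ℕ) : ℝ)) = (γ + n) * Real.Gamma (γ + n) := by
    rw [show (γ + ((n + 1 : ℕ) : ℝ)) = (γ + n) + 1 by push_cast; ring,
      Real.Gamma_add_one hγn.ne']
  have e2 : Real.Gamma (γ + 1 + n) = (γ + n) * Real.Gamma (γ + n) := by
    rw [show γ + 1 + (n : ℝ) = (γ + n) + 1 by ring, Real.Gamma_add_one hγn.ne']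
  have e3 : Real.Gamma (γ + 1) = γ * Real.Gamma γ := Real.Gamma_add_one hγ.ne'
  have e4 : Real.Gamma (α + 2) = (α + 1) * Real.Gamma (α + 1) := by
    rw [show α + (2:ℝ) = (α + 1) + 1 by ring, Real.Gamma_add_one hα1.ne']
  have e5 : Real.Gamma (α + 2 + n) = (α + 1 + n) * Real.Gamma (α + 1 + n) := by
    rw [show α + 2 + (n : ℝ) = (α + 1 + n) + 1 by ring, Real.Gamma_add_one hαn.ne']
  have hbr : (Real.Gamma (α + 1 + n) / Real.Gamma (α + 1)) *
      (Real.Gamma (α + 2) / Real.Gamma (α + 2 + n)) = (α + 1) / (α + 1 + n) := by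
    rw [e4, e5]
    field_simp
  rw [hbr, div_pow, e2, e3]
  unfold c g
  rw [e1, Nat.factorial_succ]
  push_cast
  rw [show α + ((n : ℝ) + 1) = α + 1 + n by ring]
  field_simp
  ring
end HypAux

/-- k-th derivative in α of φ₂(α) = ₁F₂(α; α+1, γ; -x). -/
theorem hyp1F2_deriv_in_alpha
    (x γ : ℝ) (hx : 0 < x) (hγ : 0 < γ) (k : ℕ) (hk : 1 ≤ k) (α : ℝ) (hα : 0 < α) :
    iteratedDeriv k (fun a : ℝ => hyp1F2 a (a + 1) γ (-x)) α =
      ((-1 : ℝ) ^ k * (k.factorial : ℝ) * x / ((α + 1) ^ (k + 1) * γ)) *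
        hypKp1Fkp2 k α γ (-x) := by
  rw [HypAux.iteratedDeriv_eq_F hγ k hk α hα, HypAux.F_eq hγ hα k]
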